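/- Let (X, ‖·‖, ≼) be a normal partially ordered Banach space and let u, v ∈ X with u ≺ v. Let T be an isotone and δ-compact set-valued mapping from the order interval [u, v] = {x ∈ X : u ≼ x ≼ v} to nonempty closed subsets of [u, v]. Then the fixed point set 𝔉(T) = {x ∈ [u,v] : x ∈ T x} is a nonempty bi-chain-complete subset of [u, v], and T has both an ≼-maximal and an ≼-minimal fixed point. (Corollary 3.7) -/

import Mathlib

open Filter Topology Metric Set

/-- The partial order on a Banach space induced by a cone `K`: `x ≼ y` iff `y - x ∈ K`. -/
def coneLe {X : Type*} [NormedAddCommGroup X] (K : Set X) (x y : X) : Prop := y - x ∈ K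

/-- The order interval `[u, v] = {x | u ≼ x ≼ v}` for the order induced by the cone `K`. -/
def coneIcc {X : Type*} [NormedAddCommGroup X] (K : Set X) (u v : X) : Set X :=
  {x | coneLe K u x ∧ coneLe K x v}
/-- Monotone convergence in a normal cone: an increasing sequence with a convergent
subsequence converges, and its limit dominates every term. -/
lemma coneMonoConv {X : Type*} [NormedAddCommGroup X] (K' : Set X) (hclosed : IsClosed K')
    (l : ℝ) (hl : 0 < l) (hnorm : ∀ x y : X, x ∈ K' → y - x ∈ K' → ‖x‖ ≤ l * ‖y‖)
    (x : ℕ → X) (hmono : ∀ m n, m ≤ n → x n - x m ∈ K')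
    (p : X) (φ : ℕ → ℕ) (hφ : StrictMono φ) (hconv : Tendsto (x ∘ φ) atTop (𝓝 p)) :
    Tendsto x atTop (𝓝 p) ∧ ∀ n, p - x n ∈ K' := by
  have hub : ∀ n, p - x n ∈ K' := by
    intro n
    have h1 : Tendsto (fun k => x (φ (k + n)) - x n) atTop (𝓝 (p - x n)) :=
      ((hconv.comp (tendsto_add_atTop_nat n)).sub tendsto_const_nhds)
    refine hclosed.mem_of_tendsto h1 (Filter.Eventually.of_forall fun k => ?_)
    exact hmono n (φ (k + n)) (le_trans (Nat.le_add_left n k) (hφ.le_apply))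
  refine ⟨Metric.tendsto_atTop.2 fun ε hε => ?_, hub⟩
  obtain ⟨N, hN⟩ := Metric.tendsto_atTop.1 hconv (ε / (l + 1)) (by positivity)
  refine ⟨φ N, fun n hn => ?_⟩
  have h2 : ‖p - x n‖ ≤ l * ‖p - x (φ N)‖ := by
    have hxy : (p - x (φ N)) - (p - x n) ∈ K' := by
      have := hmono (φ N) n hn
      simpa using this
    exact hnorm _ _ (hub n) hxy
  have h3 : ‖p - x (φ N)‖ < ε / (l + 1) := by
    have := hN N le_rfl
    rwa [dist_eq_norm, norm_sub_rev] at this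
  have h4 : l * ‖p - x (φ N)‖ < ε := by
    have hεl : l * (ε / (l + 1)) < ε := by
      rw [mul_div_assoc']
      rw [div_lt_iff₀ (by linarith)]
      nlinarith
    calc l * ‖p - x (φ N)‖ < l * (ε / (l + 1)) := by
          exact mul_lt_mul_of_pos_left h3 hl
      _ < ε := hεl
  rw [dist_eq_norm, norm_sub_rev]
  linarith

/-- Zorn's lemma for a reflexive transitive relation on a set. -/
lemma zornRel {α : Type*} (r : α → α → Prop) (hrefl : ∀ a, r a a) (htrans : Transitive r)
    (s : Set α) (hs : ∀ c ⊆ s, IsChain r c → ∃ ub ∈ s, ∀ z ∈ c, r z ub) :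
    ∃ m ∈ s, ∀ y ∈ s, r m y → r y m := by
  letI : Preorder α :=
    { le := r
      le_refl := hrefl
      le_trans := fun a b c hab hbc => htrans hab hbc
      lt := fun a b => r a b ∧ ¬ r b a
      lt_iff_le_not_ge := fun a b => Iff.rfl }
  obtain ⟨m, hm⟩ := zorn_le₀ s hs
  exact ⟨m, hm.1, fun y hy hmy => hm.2 hy hmy⟩

/-- If `z n ∈ T (y n)`, both sequences tend to `p`, and `T` is δ-continuous at `p`
with nonempty bounded closed value, then `p ∈ T p`. -/
lemma limitFixed {X : Type*} [NormedAddCommGroup X]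
    (T : X → Set X) (S : Set X) (hSbdd : Bornology.IsBounded S)
    (hTval : ∀ x ∈ S, (T x).Nonempty ∧ IsClosed (T x) ∧ T x ⊆ S)
    (hTcont : ∀ (w : ℕ → X) (p : X), (∀ n, w n ∈ S) → p ∈ S →
      Filter.Tendsto w Filter.atTop (nhds p) →
      Filter.Tendsto (fun n => Metric.hausdorffDist (T (w n)) (T p)) Filter.atTop (nhds 0))
    (y z : ℕ → X) (p : X) (hy : ∀ n, y n ∈ S) (hz : ∀ n, z n ∈ T (y n))
    (hyp : Tendsto y atTop (𝓝 p)) (hzp : Tendsto z atTop (𝓝 p)) (hp : p ∈ S) :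
    p ∈ T p := by
  have hne : ∀ n, (T (y n)).Nonempty := fun n => (hTval _ (hy n)).1
  have hpne : (T p).Nonempty := (hTval _ hp).1
  have hbdd : ∀ x ∈ S, Bornology.IsBounded (T x) := fun x hx =>
    hSbdd.subset (hTval _ hx).2.2
  have hfin : ∀ n, EMetric.hausdorffEdist (T (y n)) (T p) ≠ ⊤ := fun n =>
    Metric.hausdorffEdist_ne_top_of_nonempty_of_bounded (hne n) hpne
      (hbdd _ (hy n)) (hbdd _ hp)
  have h1 : ∀ n, Metric.infDist (z n) (T p) ≤ Metric.hausdorffDist (T (y n)) (T p) :=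
    fun n => Metric.infDist_le_hausdorffDist_of_mem (hz n) (hfin n)
  have h2 : Tendsto (fun n => Metric.infDist (z n) (T p)) atTop (𝓝 0) := by
    refine squeeze_zero (fun n => Metric.infDist_nonneg) h1 ?_
    exact hTcont y p hy hp hyp
  have h3 : ∀ n, Metric.infDist p (T p) ≤ Metric.infDist (z n) (T p) + dist p (z n) :=
    fun n => Metric.infDist_le_infDist_add_dist
  have h4 : Tendsto (fun n => Metric.infDist (z n) (T p) + dist p (z n)) atTop (𝓝 0) := by
    have hd : Tendsto (fun n => dist p (z n)) atTop (𝓝 0) := by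
      simpa [dist_comm] using (tendsto_iff_dist_tendsto_zero.1 hzp)
    simpa using h2.add hd
  have h5 : Metric.infDist p (T p) ≤ 0 := ge_of_tendsto h4 (Eventually.of_forall h3)
  have h6 : Metric.infDist p (T p) = 0 := le_antisymm h5 Metric.infDist_nonneg
  exact ((hTval _ hp).2.1.mem_iff_infDist_zero hpne).2 h6

/-- A chain of fixed points of a δ-compact δ-continuous map has a least upper bound which
is itself a fixed point. -/
lemma chainSupFixed {X : Type*} [NormedAddCommGroup X]
    (K : Set X) (hKclosed : IsClosed K) (hK0 : (0 : X) ∈ K)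
    (hKadd : ∀ x ∈ K, ∀ y ∈ K, x + y ∈ K)
    (l : ℝ) (hl : 0 < l) (hnorm : ∀ x y : X, x ∈ K → y - x ∈ K → ‖x‖ ≤ l * ‖y‖)
    (S : Set X) (hSclosed : IsClosed S) (hSbdd : Bornology.IsBounded S)
    (T : X → Set X)
    (hTval : ∀ x ∈ S, (T x).Nonempty ∧ IsClosed (T x) ∧ T x ⊆ S)
    (hTcont : ∀ (w : ℕ → X) (p : X), (∀ n, w n ∈ S) → p ∈ S →
      Filter.Tendsto w Filter.atTop (nhds p) →
      Filter.Tendsto (fun n => Metric.hausdorffDist (T (w n)) (T p)) Filter.atTop (nhds 0))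
    (hcpt : IsCompact (closure (⋃ x ∈ S, T x)))
    (C : Set X) (hC : C ⊆ {x | x ∈ S ∧ x ∈ T x}) (hCne : C.Nonempty)
    (hchain : IsChain (coneLe K) C) :
    ∃ s, (s ∈ S ∧ s ∈ T s) ∧ (∀ c ∈ C, coneLe K c s) ∧
      ∀ b, (∀ c ∈ C, coneLe K c b) → coneLe K s b := by
  classical
  have htr : ∀ {a b c : X}, coneLe K a b → coneLe K b c → coneLe K a c := by
    intro a b c h1 h2
    have := hKadd _ h2 _ h1
    simpa [coneLe, sub_add_sub_cancel] using this
  have hrefl : ∀ a : X, coneLe K a a := fun a => by simp [coneLe, hK0]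
  have hCsub : C ⊆ closure (⋃ x ∈ S, T x) := fun c hc =>
    subset_closure (Set.mem_biUnion (hC hc).1 (hC hc).2)
  have hsep : TopologicalSpace.IsSeparable C := hcpt.isSeparable.mono hCsub
  haveI : TopologicalSpace.SeparableSpace C := hsep.separableSpace
  haveI : Nonempty C := hCne.to_subtype
  obtain ⟨dseq, hdense⟩ := TopologicalSpace.exists_dense_seq C
  set d : ℕ → X := fun n => (dseq n).1 with hd
  have hdC : ∀ n, d n ∈ C := fun n => (dseq n).2
  have hdd : ∀ c ∈ C, ∀ ε > (0:ℝ), ∃ n, dist c (d n) < ε := by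
    intro c hc ε hε
    have h1 : (⟨c, hc⟩ : C) ∈ closure (Set.range dseq) := hdense _
    rw [Metric.mem_closure_iff] at h1
    obtain ⟨b, ⟨n, rfl⟩, hb⟩ := h1 ε hε
    exact ⟨n, by simpa [Subtype.dist_eq] using hb⟩
  -- maxima of initial segments of `d`
  set e : ℕ → X := fun n =>
    Nat.rec (d 0) (fun n en => if coneLe K (d (n+1)) en then en else d (n+1)) n with he
  have he0 : e 0 = d 0 := rfl
  have hesucc : ∀ n, e (n+1) = if coneLe K (d (n+1)) (e n) then e n else d (n+1) :=
    fun n => rfl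
  have heC : ∀ n, e n ∈ C := by
    intro n
    induction n with
    | zero => exact hdC 0
    | succ n ih =>
      rw [hesucc]
      split
      · exact ih
      · exact hdC (n+1)
  have hestep : ∀ n, coneLe K (e n) (e (n+1)) := by
    intro n
    rw [hesucc]
    split
    · exact hrefl _
    · rename_i h
      by_cases heq : e n = d (n+1)
      · rw [heq]; exact hrefl _
      · rcases hchain (heC n) (hdC (n+1)) heq with h1 | h1
        · exact h1
        · exact absurd h1 h
  have hmono : ∀ m n, m ≤ n → coneLe K (e m) (e n) := by
    intro m n hmn
    induction n, hmn using Nat.le_induction with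
    | base => exact hrefl _
    | succ n hmn ih => exact htr ih (hestep n)
  have hde : ∀ n, coneLe K (d n) (e n) := by
    intro n
    cases n with
    | zero => exact hrefl _
    | succ n =>
      rw [hesucc]
      split
      · assumption
      · exact hrefl _
  -- convergence
  obtain ⟨p, -, φ, hφ, hconv⟩ := hcpt.tendsto_subseq (fun n => hCsub (heC n))
  obtain ⟨hte, hub⟩ := coneMonoConv K hKclosed l hl hnorm e
    (fun m n h => hmono m n h) p φ hφ hconv
  have heS : ∀ n, e n ∈ S := fun n => (hC (heC n)).1
  have hpS : p ∈ S := hSclosed.mem_of_tendsto hte (Eventually.of_forall heS)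
  have hpT : p ∈ T p := limitFixed T S hSbdd hTval hTcont e e p heS
    (fun n => (hC (heC n)).2) hte hte hpS
  refine ⟨p, ⟨hpS, hpT⟩, ?_, ?_⟩
  · -- upper bound of C
    intro c hc
    have : p - c ∈ closure K := by
      rw [Metric.mem_closure_iff]
      intro ε hε
      obtain ⟨n, hn⟩ := hdd c hc ε hε
      refine ⟨p - d n, htr (hde n) (hub n), ?_⟩
      rw [dist_eq_norm]
      have heqq : p - c - (p - d n) = d n - c := by abel
      rw [heqq, ← dist_eq_norm, dist_comm]
      exact hn
    rwa [hKclosed.closure_eq] at this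
  · -- least upper bound
    intro b hb
    have h1 : Tendsto (fun n => b - e n) atTop (𝓝 (b - p)) :=
      tendsto_const_nhds.sub hte
    exact hKclosed.mem_of_tendsto h1 (Eventually.of_forall fun n => hb _ (heC n))

/-- Corollary 3.7: in a normal partially ordered Banach space, for `u ≺ v` and an isotone,
δ-compact set-valued map `T` on the order interval `[u, v]` with nonempty closed values
contained in `[u, v]`, the fixed point set `𝔉(T)` is a nonempty bi-chain-complete subset of
`[u, v]`, and `T` has a maximal and a minimal fixed point. -/
theorem setvalued_fixed_points_on_order_interval
    {X : Type*} [NormedAddCommGroup X] [NormedSpace ℝ X] [CompleteSpace X]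
    (K : Set X) (hKclosed : IsClosed K) (hK0 : (0 : X) ∈ K)
    (hKadd : ∀ x ∈ K, ∀ y ∈ K, x + y ∈ K)
    (hKsmul : ∀ c : ℝ, 0 ≤ c → ∀ x ∈ K, c • x ∈ K)
    (hKpointed : ∀ x ∈ K, -x ∈ K → x = 0)
    -- normality of the order
    (hnormal : ∃ l : ℝ, 0 < l ∧ ∀ x y : X, x ∈ K → y - x ∈ K → ‖x‖ ≤ l * ‖y‖)
    -- u ≺ v
    (u v : X) (huv : coneLe K u v) (hne : u ≠ v)
    -- T has nonempty closed values contained in [u, v]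
    (T : X → Set X)
    (hTval : ∀ x ∈ coneIcc K u v,
      (T x).Nonempty ∧ IsClosed (T x) ∧ T x ⊆ coneIcc K u v)
    -- T is isotone (≼-increasing upward)
    (hiso : ∀ x ∈ coneIcc K u v, ∀ y ∈ coneIcc K u v, coneLe K x y →
      ∀ z ∈ T x, ∃ w ∈ T y, coneLe K z w)
    -- T is δ-continuous
    (hTcont : ∀ (w : ℕ → X) (p : X), (∀ n, w n ∈ coneIcc K u v) → p ∈ coneIcc K u v →
      Filter.Tendsto w Filter.atTop (nhds p) →
      Filter.Tendsto (fun n => Metric.hausdorffDist (T (w n)) (T p)) Filter.atTop (nhds 0))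
    -- T maps bounded sets into relatively compact sets
    (hTcomp : ∀ C ⊆ coneIcc K u v, Bornology.IsBounded C →
      IsCompact (closure (⋃ x ∈ C, T x))) :
    ({x | x ∈ coneIcc K u v ∧ x ∈ T x}).Nonempty ∧
    (∀ C ⊆ {x | x ∈ coneIcc K u v ∧ x ∈ T x}, C.Nonempty → IsChain (coneLe K) C →
      (∃ b, ∀ c ∈ C, coneLe K c b) → (∃ a, ∀ c ∈ C, coneLe K a c) →
      (∃ s, s ∈ {x | x ∈ coneIcc K u v ∧ x ∈ T x} ∧ (∀ c ∈ C, coneLe K c s) ∧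
        ∀ b, (∀ c ∈ C, coneLe K c b) → coneLe K s b) ∧
      (∃ i, i ∈ {x | x ∈ coneIcc K u v ∧ x ∈ T x} ∧ (∀ c ∈ C, coneLe K i c) ∧
        ∀ a, (∀ c ∈ C, coneLe K a c) → coneLe K a i)) ∧
    (∃ m, m ∈ {x | x ∈ coneIcc K u v ∧ x ∈ T x} ∧
      ∀ y ∈ {x | x ∈ coneIcc K u v ∧ x ∈ T x}, coneLe K m y → m = y) ∧
    (∃ m', m' ∈ {x | x ∈ coneIcc K u v ∧ x ∈ T x} ∧
      ∀ y ∈ {x | x ∈ coneIcc K u v ∧ x ∈ T x}, coneLe K y m' → m' = y) := by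
  classical
  obtain ⟨l, hl, hnorm⟩ := hnormal
  have hrefl : ∀ a : X, coneLe K a a := fun a => by simp [coneLe, hK0]
  have htr : ∀ {a b c : X}, coneLe K a b → coneLe K b c → coneLe K a c := by
    intro a b c h1 h2
    have := hKadd _ h2 _ h1
    simpa [coneLe, sub_add_sub_cancel] using this
  have hanti : ∀ {a b : X}, coneLe K a b → coneLe K b a → a = b := by
    intro a b h1 h2
    have h3 : b - a = 0 := hKpointed _ h1 (by simpa [coneLe, neg_sub] using h2)
    exact (sub_eq_zero.mp h3).symm
  set S := coneIcc K u v with hSdef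
  have hSbdd : Bornology.IsBounded S := by
    refine (Metric.isBounded_closedBall (x := u) (r := l * ‖v - u‖)).subset ?_
    rintro x ⟨hx1, hx2⟩
    have h1 : ‖x - u‖ ≤ l * ‖v - u‖ := by
      refine hnorm _ _ hx1 ?_
      simpa [coneLe] using (show v - x ∈ K from hx2)
    simpa [Metric.mem_closedBall, dist_eq_norm] using h1
  have hSclosed : IsClosed S := by
    have : S = (fun x => x - u) ⁻¹' K ∩ (fun x => v - x) ⁻¹' K := by
      ext x; simp [hSdef, coneIcc, coneLe]
    rw [this]
    exact (hKclosed.preimage (continuous_id.sub continuous_const)).inter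
      (hKclosed.preimage (continuous_const.sub continuous_id))
  have hcpt : IsCompact (closure (⋃ x ∈ S, T x)) := hTcomp S Subset.rfl hSbdd
  -- nonemptiness of the fixed point set via iteration from u
  have hu : u ∈ S := ⟨hrefl u, huv⟩
  obtain ⟨z0, hz0⟩ := (hTval u hu).1
  have hF_ne : ∃ p, p ∈ S ∧ p ∈ T p := by
    set P := {q : X × X // q.1 ∈ S ∧ q.2 ∈ T q.1 ∧ coneLe K q.1 q.2} with hP
    have hmemS : ∀ q : P, q.1.2 ∈ S := fun q => (hTval _ q.2.1).2.2 q.2.2.1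
    have hw : ∀ q : P, ∃ w ∈ T q.1.2, coneLe K q.1.2 w := fun q =>
      hiso q.1.1 q.2.1 q.1.2 (hmemS q) q.2.2.2 q.1.2 q.2.2.1
    set step : P → P := fun q => ⟨(q.1.2, Classical.choose (hw q)), hmemS q,
      (Classical.choose_spec (hw q)).1, (Classical.choose_spec (hw q)).2⟩ with hstepdef
    have hq0 : ((u, z0) : X × X).1 ∈ S ∧ ((u, z0) : X × X).2 ∈ T ((u, z0) : X × X).1 ∧
        coneLe K ((u, z0) : X × X).1 ((u, z0) : X × X).2 :=
      ⟨hu, hz0, ((hTval u hu).2.2 hz0).1⟩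
    set seq : ℕ → P := fun n => step^[n] ⟨(u, z0), hq0⟩ with hseqdef
    have hseq : ∀ n, seq (n + 1) = step (seq n) := fun n =>
      Function.iterate_succ_apply' step n _
    set y : ℕ → X := fun n => (seq n).1.1 with hy
    have hstep1 : ∀ q : P, (step q).1.1 = q.1.2 := fun q => rfl
    have hysucc : ∀ n, y (n + 1) = (seq n).1.2 := by
      intro n; simp only [hy]; rw [hseq n]
    have hyS : ∀ n, y n ∈ S := fun n => (seq n).2.1
    have hyT : ∀ n, y (n + 1) ∈ T (y n) := fun n => by
      rw [hysucc n]; exact (seq n).2.2.1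
    have hystep : ∀ n, coneLe K (y n) (y (n + 1)) := fun n => by
      rw [hysucc n]; exact (seq n).2.2.2
    have hymono : ∀ m n, m ≤ n → coneLe K (y m) (y n) := by
      intro m n hmn
      induction n, hmn using Nat.le_induction with
      | base => exact hrefl _
      | succ n hmn ih => exact htr ih (hystep n)
    have hycpt : ∀ n, y n ∈ closure (⋃ x ∈ S, T x) ∪ {u} := by
      intro n
      cases n with
      | zero => right; rfl
      | succ n => exact Or.inl (subset_closure (Set.mem_biUnion (hyS n) (hyT n)))
    obtain ⟨p, -, φ, hφ, hconv⟩ :=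
      (hcpt.union isCompact_singleton).tendsto_subseq hycpt
    obtain ⟨hty, -⟩ := coneMonoConv K hKclosed l hl hnorm y
      (fun m n h => hymono m n h) p φ hφ hconv
    have hpS : p ∈ S := hSclosed.mem_of_tendsto hty (Eventually.of_forall hyS)
    have hty1 : Tendsto (fun n => y (n + 1)) atTop (𝓝 p) :=
      hty.comp (tendsto_add_atTop_nat 1)
    exact ⟨p, hpS, limitFixed T S hSbdd hTval hTcont y (fun n => y (n + 1)) p hyS
      hyT hty hty1 hpS⟩
  obtain ⟨p0, hp0⟩ := hF_ne
  -- the dual cone for infima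
  set Kn : Set X := (fun x => -x) ⁻¹' K with hKn
  have hKnclosed : IsClosed Kn := hKclosed.preimage continuous_neg
  have hKn0 : (0 : X) ∈ Kn := by simp [hKn, hK0]
  have hKnadd : ∀ x ∈ Kn, ∀ y ∈ Kn, x + y ∈ Kn := by
    intro x hx y hy
    simp only [hKn, Set.mem_preimage] at hx hy ⊢
    have h1 : -(x + y) = -x + -y := by abel
    rw [h1]
    exact hKadd _ hx _ hy
  have hKnnorm : ∀ x y : X, x ∈ Kn → y - x ∈ Kn → ‖x‖ ≤ l * ‖y‖ := by
    intro x y hx hxy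
    have h2 : -y - -x ∈ K := by
      have h3 : -y - -x = -(y - x) := by abel
      rw [h3]; exact hxy
    have := hnorm (-x) (-y) hx h2
    simpa using this
  have hKnle : ∀ x y : X, coneLe Kn x y ↔ coneLe K y x := by
    intro x y; simp [coneLe, hKn, neg_sub]
  -- chain completeness
  have hsup : ∀ C ⊆ {x | x ∈ S ∧ x ∈ T x}, C.Nonempty → IsChain (coneLe K) C →
      ∃ s, (s ∈ S ∧ s ∈ T s) ∧ (∀ c ∈ C, coneLe K c s) ∧
        ∀ b, (∀ c ∈ C, coneLe K c b) → coneLe K s b :=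
    fun C hC hCne hchain => chainSupFixed K hKclosed hK0 hKadd l hl hnorm S hSclosed
      hSbdd T hTval hTcont hcpt C hC hCne hchain
  have hinf : ∀ C ⊆ {x | x ∈ S ∧ x ∈ T x}, C.Nonempty → IsChain (coneLe K) C →
      ∃ s, (s ∈ S ∧ s ∈ T s) ∧ (∀ c ∈ C, coneLe K s c) ∧
        ∀ a, (∀ c ∈ C, coneLe K a c) → coneLe K a s := by
    intro C hC hCne hchain
    have hchain' : IsChain (coneLe Kn) C := by
      intro a ha b hb hab
      rcases hchain ha hb hab with h | h
      · exact Or.inr ((hKnle b a).mpr h)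
      · exact Or.inl ((hKnle a b).mpr h)
    obtain ⟨s, hsF, hub, hlub⟩ := chainSupFixed Kn hKnclosed hKn0 hKnadd l hl hKnnorm
      S hSclosed hSbdd T hTval hTcont hcpt C hC hCne hchain'
    exact ⟨s, hsF, fun c hc => (hKnle c s).mp (hub c hc),
      fun a ha => (hKnle s a).mp (hlub a fun c hc => (hKnle c a).mpr (ha c hc))⟩
  refine ⟨⟨p0, hp0⟩, ?_, ?_, ?_⟩
  · intro C hC hCne hchain hbdd hbdd'
    refine ⟨?_, ?_⟩
    · obtain ⟨s, hsF, h1, h2⟩ := hsup C hC hCne hchain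
      exact ⟨s, hsF, h1, h2⟩
    · obtain ⟨s, hsF, h1, h2⟩ := hinf C hC hCne hchain
      exact ⟨s, hsF, h1, h2⟩
  · -- maximal fixed point
    have hbound : ∀ c ⊆ {x | x ∈ S ∧ x ∈ T x}, IsChain (coneLe K) c →
        ∃ ub ∈ {x | x ∈ S ∧ x ∈ T x}, ∀ z ∈ c, coneLe K z ub := by
      intro c hc hchain
      rcases c.eq_empty_or_nonempty with rfl | hcne
      · exact ⟨p0, hp0, fun z hz => absurd hz (Set.notMem_empty z)⟩
      · obtain ⟨s, hsF, h1, -⟩ := hsup c hc hcne hchain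
        exact ⟨s, hsF, h1⟩
    obtain ⟨m, hmF, hm⟩ := zornRel (coneLe K) hrefl (fun a b c h1 h2 => htr h1 h2)
      {x | x ∈ S ∧ x ∈ T x} hbound
    exact ⟨m, hmF, fun y hy hmy => hanti hmy (hm y hy hmy)⟩
  · -- minimal fixed point
    have hbound : ∀ c ⊆ {x | x ∈ S ∧ x ∈ T x}, IsChain (fun a b => coneLe K b a) c →
        ∃ ub ∈ {x | x ∈ S ∧ x ∈ T x}, ∀ z ∈ c, coneLe K ub z := by
      intro c hc hchain
      rcases c.eq_empty_or_nonempty with rfl | hcne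
      · exact ⟨p0, hp0, fun z hz => absurd hz (Set.notMem_empty z)⟩
      · have hchain' : IsChain (coneLe K) c := fun a ha b hb hab =>
          (hchain ha hb hab).symm
        obtain ⟨s, hsF, h1, -⟩ := hinf c hc hcne hchain'
        exact ⟨s, hsF, h1⟩
    obtain ⟨m, hmF, hm⟩ := zornRel (fun a b => coneLe K b a) hrefl
      (fun a b c h1 h2 => htr h2 h1) {x | x ∈ S ∧ x ∈ T x} hbound
    exact ⟨m, hmF, fun y hy hym => hanti (hm y hy hym) hym⟩
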